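/- arXiv:1806.07211 — 2 statements merged into one kernel-verified Lean document; each statement's English description precedes it below -/
import Mathlib

section
/- Let Σ be a d-collapsible simplicial complex on [n] and E ⊆ [n] such that every facet of Σ containing E has dimension at most d−1. Then the complex Σ∖E obtained by removing from Σ all faces containing E is d-collapsible. -/
namespace ChordalPaper

/-- A simplicial complex on vertex set `Fin n`: a family of finsets closed under subsets. -/
def IsComplex {n : ℕ} (Γ : Set (Finset (Fin n))) : Prop :=
  ∀ F ∈ Γ, ∀ F' ⊆ F, F' ∈ Γ

/-- The `d`-closure `Δ_d(Γ)`: all subsets of size `≤ d`, together with all subsets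
all of whose `(d+1)`-element subsets are faces of `Γ`. -/
def dClosure {n : ℕ} (d : ℕ) (Γ : Set (Finset (Fin n))) : Set (Finset (Fin n)) :=
  {F | F.card ≤ d ∨ ∀ G ⊆ F, G.card = d + 1 → G ∈ Γ}

/-- The pure `(d-1)`-skeleton `⟨[n]⟩^{[d-1]}` of the full simplex: all subsets of size `≤ d`. -/
def fullSkel (n d : ℕ) : Set (Finset (Fin n)) := {F | F.card ≤ d}

/-- A facet: a maximal face. -/
def IsFacet {n : ℕ} (Γ : Set (Finset (Fin n))) (F : Finset (Fin n)) : Prop :=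
  F ∈ Γ ∧ ∀ G ∈ Γ, F ⊆ G → G = F

/-- A free face: a face contained in a unique facet. -/
def IsFreeFace {n : ℕ} (Γ : Set (Finset (Fin n))) (E : Finset (Fin n)) : Prop :=
  E ∈ Γ ∧ ∃! F, IsFacet Γ F ∧ E ⊆ F

/-- Collapse at `E`: remove all faces containing `E` (including `E` itself). -/
def collapseFace {n : ℕ} (Γ : Set (Finset (Fin n))) (E : Finset (Fin n)) :
    Set (Finset (Fin n)) := {F ∈ Γ | ¬ E ⊆ F}

/-- Successive collapses along a list of faces. -/
def collapseList {n : ℕ} (Γ : Set (Finset (Fin n))) :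
    List (Finset (Fin n)) → Set (Finset (Fin n))
  | [] => Γ
  | E :: L => collapseList (collapseFace Γ E) L

/-- A free sequence: each face is free in the complex obtained by collapsing the previous ones. -/
def IsFreeSeq {n : ℕ} (Γ : Set (Finset (Fin n))) : List (Finset (Fin n)) → Prop
  | [] => True
  | E :: L => IsFreeFace Γ E ∧ IsFreeSeq (collapseFace Γ E) L

/-- `d`-collapsibility: a sequence of elementary `d`-collapsings (at free faces of
dimension `< d`, i.e. cardinality `≤ d`) reduces `Γ` to the void complex. -/
def Collapsible {n : ℕ} (d : ℕ) (Γ : Set (Finset (Fin n))) : Prop :=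
  ∃ L : List (Finset (Fin n)),
    IsFreeSeq Γ L ∧ (∀ E ∈ L, E.card ≤ d) ∧ collapseList Γ L = ∅

/-- Simplicial deletion `Γ∖E`: remove all faces strictly containing `E` (keeping `E`). -/
def srDel {n : ℕ} (Γ : Set (Finset (Fin n))) (E : Finset (Fin n)) :
    Set (Finset (Fin n)) := {F ∈ Γ | ¬ E ⊂ F}

/-- Successive simplicial deletions along a list of faces. -/
def srDelList {n : ℕ} (Γ : Set (Finset (Fin n))) :
    List (Finset (Fin n)) → Set (Finset (Fin n))
  | [] => Γ
  | E :: L => srDelList (srDel Γ E) L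

/-- A simplicial order for a `d`-closure on `Fin n`: a sequence of non-facet free faces of
cardinality `d` whose successive simplicial deletions reduce the complex to the pure
`(d-1)`-skeleton of the full simplex. -/
def IsSimpOrder {n : ℕ} (d : ℕ) (Γ : Set (Finset (Fin n))) :
    List (Finset (Fin n)) → Prop
  | [] => Γ = fullSkel n d
  | E :: L => E.card = d ∧ IsFreeFace Γ E ∧ ¬ IsFacet Γ E ∧ IsSimpOrder d (srDel Γ E) L

/-- `Γ` is `d`-chordal: its `d`-closure equals the pure `(d-1)`-skeleton of the full
simplex or admits a simplicial order. -/
def DChordal {n : ℕ} (d : ℕ) (Γ : Set (Finset (Fin n))) : Prop :=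
  ∃ L, IsSimpOrder d (dClosure d Γ) L

/-- A minimal nonface of `Γ`. -/
def IsMinNonface {n : ℕ} (Γ : Set (Finset (Fin n))) (F : Finset (Fin n)) : Prop :=
  F ∉ Γ ∧ ∀ G ⊂ F, G ∈ Γ

end ChordalPaper

open ChordalPaper

section Helpers
variable {n d : ℕ}

lemma collapseList_append (Γ : Set (Finset (Fin n))) (L₁ L₂ : List (Finset (Fin n))) :
    collapseList Γ (L₁ ++ L₂) = collapseList (collapseList Γ L₁) L₂ := by
  induction L₁ generalizing Γ with
  | nil => rfl
  | cons E L ih => simp only [List.cons_append, collapseList]; exact ih _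

lemma isFreeSeq_append (Γ : Set (Finset (Fin n))) (L₁ L₂ : List (Finset (Fin n)))
    (h1 : IsFreeSeq Γ L₁) (h2 : IsFreeSeq (collapseList Γ L₁) L₂) :
    IsFreeSeq Γ (L₁ ++ L₂) := by
  induction L₁ generalizing Γ with
  | nil => exact h2
  | cons E L ih => exact ⟨h1.1, ih _ h1.2 h2⟩

lemma isComplex_collapseFace {Γ : Set (Finset (Fin n))} (h : IsComplex Γ)
    (E : Finset (Fin n)) : IsComplex (collapseFace Γ E) := by
  intro F hF F' hF'
  exact ⟨h F hF.1 F' hF', fun hE => hF.2 (hE.trans hF')⟩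

/-- Every face of a set of finsets extends to a facet. -/
lemma exists_facet {Γ : Set (Finset (Fin n))} {G : Finset (Fin n)} (hG : G ∈ Γ) :
    ∃ F, IsFacet Γ F ∧ G ⊆ F := by
  have hfin : ({F | F ∈ Γ ∧ G ⊆ F} : Set (Finset (Fin n))).Finite := Set.toFinite _
  obtain ⟨F, hF, hmax⟩ := Set.exists_max_image _ Finset.card hfin ⟨G, hG, subset_rfl⟩
  refine ⟨F, ⟨hF.1, fun H hH hFH => ?_⟩, hF.2⟩
  have := hmax H ⟨hH, hF.2.trans hFH⟩
  exact (Finset.eq_of_subset_of_card_le hFH this.ge).symm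

/-- Lemma A: removing an "upward-closed within Γ" family of small faces,
one maximal face at a time, is a free sequence. -/
lemma collapse_upward_closed (A : Finset (Finset (Fin n))) :
    ∀ Γ : Set (Finset (Fin n)), (∀ G ∈ A, G ∈ Γ) →
    (∀ G ∈ A, ∀ F ∈ Γ, G ⊂ F → F ∈ A) → (∀ G ∈ A, G.card ≤ d) →
    ∃ L, IsFreeSeq Γ L ∧ (∀ E' ∈ L, E'.card ≤ d) ∧ collapseList Γ L = Γ \ ↑A := by
  induction A using Finset.strongInductionOn with
  | _ A ih =>
    intro Γ hAΓ hup hcard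
    rcases A.eq_empty_or_nonempty with rfl | hne
    · exact ⟨[], trivial, by simp, by simp [collapseList]⟩
    obtain ⟨G, hGA, hGmax⟩ := A.exists_max_image Finset.card hne
    -- G is a facet of Γ, and the only face of Γ containing G
    have honly : ∀ F ∈ Γ, G ⊆ F → F = G := by
      intro F hF hGF
      by_contra hne'
      have hss : G ⊂ F := hGF.ssubset_of_ne (Ne.symm hne')
      have hFA : F ∈ A := hup G hGA F hF hss
      exact absurd (hGmax F hFA) (not_le.mpr (Finset.card_lt_card hss))
    have hGΓ : G ∈ Γ := hAΓ G hGA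
    have hfacet : IsFacet Γ G := ⟨hGΓ, honly⟩
    have hfree : IsFreeFace Γ G :=
      ⟨hGΓ, G, ⟨hfacet, subset_rfl⟩, fun F ⟨hF, hGF⟩ => honly F hF.1 hGF⟩
    have hcoll : collapseFace Γ G = Γ \ {G} := by
      ext F
      simp only [collapseFace, Set.mem_setOf_eq, Set.mem_diff, Set.mem_singleton_iff]
      refine and_congr_right fun hF => ⟨fun h h' => h (h' ▸ subset_rfl), fun h h' => h (honly F hF h')⟩
    obtain ⟨L', hseq', hcard', hres'⟩ := ih (A.erase G) (A.erase_ssubset hGA) (Γ \ {G})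
      (fun G' hG' => ⟨hAΓ G' (A.erase_subset G hG'), fun h => (Finset.ne_of_mem_erase hG') (by simpa using h)⟩)
      (fun G' hG' F hF hss => by
        have hFA : F ∈ A := hup G' (A.erase_subset G hG') F hF.1 hss
        exact Finset.mem_erase.mpr ⟨fun h => hF.2 (by simpa using h), hFA⟩)
      (fun G' hG' => hcard G' (A.erase_subset G hG'))
    refine ⟨G :: L', ⟨hfree, by rw [hcoll]; exact hseq'⟩,
      ?_, ?_⟩
    · intro E' hE'
      rcases List.mem_cons.mp hE' with h | h
      · exact h ▸ hcard G hGA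
      · exact hcard' E' h
    · show collapseList (collapseFace Γ G) L' = Γ \ ↑A
      rw [hcoll, hres']
      ext F
      simp only [Set.mem_diff, Set.mem_singleton_iff, Finset.coe_erase, Set.mem_diff,
        Finset.mem_coe, Set.mem_singleton_iff]
      constructor
      · rintro ⟨⟨hF, hne'⟩, h⟩
        exact ⟨hF, fun hFA => h ⟨hFA, hne'⟩⟩
      · rintro ⟨hF, h⟩
        have hne' : F ≠ G := fun e => h (e ▸ hGA)
        exact ⟨⟨hF, hne'⟩, fun ⟨hFA, _⟩ => h hFA⟩

/-- Main lemma, by induction on the collapsing sequence. -/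
lemma main_lemma (E : Finset (Fin n)) :
    ∀ (L : List (Finset (Fin n))) (S : Set (Finset (Fin n))), IsComplex S →
    IsFreeSeq S L → (∀ E' ∈ L, E'.card ≤ d) → collapseList S L = ∅ →
    (∀ F, IsFacet S F → E ⊆ F → F.card ≤ d) →
    Collapsible d (collapseFace S E) := by
  intro L
  induction L with
  | nil =>
    intro S _ _ _ hempty _
    have : S = ∅ := hempty
    refine ⟨[], trivial, by simp, ?_⟩
    show collapseFace S E = ∅
    rw [this]; ext F; simp [collapseFace]
  | cons E₁ L' ih =>
    intro S hS hseq hcards hempty hfac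
    obtain ⟨hfree, hseq'⟩ := hseq
    set T := collapseFace S E₁ with hT
    have hcards' : ∀ E' ∈ L', E'.card ≤ d := fun E' h => hcards E' (List.mem_cons_of_mem _ h)
    have hE₁d : E₁.card ≤ d := hcards E₁ List.mem_cons_self
    obtain ⟨hE₁S, F₁, ⟨hF₁facet, hE₁F₁⟩, huniq⟩ := hfree
    -- every face of S containing E₁ is contained in F₁
    have hsub : ∀ F ∈ S, E₁ ⊆ F → F ⊆ F₁ := by
      intro F hF hE₁F
      obtain ⟨F', hF'facet, hFF'⟩ := exists_facet hF
      have : F' = F₁ := huniq F' ⟨hF'facet, hE₁F.trans hFF'⟩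
      exact this ▸ hFF'
    have hTcomplex : IsComplex T := isComplex_collapseFace hS E₁
    have hTfac : ∀ F, IsFacet T F → E ⊆ F → F.card ≤ d := by
      intro F hFfacet hEF
      obtain ⟨F', hF'facet, hFF'⟩ := exists_facet (hFfacet.1.1 : F ∈ S)
      exact le_trans (Finset.card_le_card hFF') (hfac F' hF'facet (hEF.trans hFF'))
    have ihT : Collapsible d (collapseFace T E) :=
      ih T hTcomplex hseq' hcards' hempty hTfac
    obtain ⟨L₂, hseq₂, hcard₂, hres₂⟩ := ihT
    by_cases hEE₁ : E ⊆ E₁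
    · -- Case 1: collapseFace S E = collapseFace T E
      have heq : collapseFace S E = collapseFace T E := by
        ext F
        simp only [collapseFace, Set.mem_setOf_eq]
        constructor
        · rintro ⟨hF, h⟩; exact ⟨⟨hF, fun h1 => h (hEE₁.trans h1)⟩, h⟩
        · rintro ⟨⟨hF, _⟩, h⟩; exact ⟨hF, h⟩
      rw [heq]; exact ⟨L₂, hseq₂, hcard₂, hres₂⟩
    · by_cases hEF₁ : E ⊆ F₁
      · -- Case 2b: card F₁ ≤ d; remove the interval [E₁, F₁] ∖ E facet by facet
        have hF₁d : F₁.card ≤ d := hfac F₁ hF₁facet hEF₁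
        classical
        set A : Finset (Finset (Fin n)) :=
          F₁.powerset.filter (fun G => E₁ ⊆ G ∧ ¬ E ⊆ G) with hA
        have hmemA : ∀ G, G ∈ A ↔ G ⊆ F₁ ∧ E₁ ⊆ G ∧ ¬ E ⊆ G := by
          intro G; simp [hA, Finset.mem_filter, Finset.mem_powerset]
        obtain ⟨L₁, hseq₁, hcard₁, hres₁⟩ := collapse_upward_closed A (collapseFace S E)
          (fun G hG => by
            obtain ⟨h1, _, h3⟩ := (hmemA G).mp hG
            exact ⟨hS F₁ hF₁facet.1 G h1, h3⟩)
          (fun G hG F hF hss => by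
            obtain ⟨h1, h2, _⟩ := (hmemA G).mp hG
            exact (hmemA F).mpr ⟨hsub F hF.1 (h2.trans hss.subset), h2.trans hss.subset, hF.2⟩)
          (fun G hG => le_trans (Finset.card_le_card ((hmemA G).mp hG).1) hF₁d)
        have hres₁' : collapseList (collapseFace S E) L₁ = collapseFace T E := by
          rw [hres₁]
          ext F
          simp only [Set.mem_diff, Finset.mem_coe, hmemA, collapseFace, Set.mem_setOf_eq]
          constructor
          · rintro ⟨⟨hF, hE⟩, h⟩
            refine ⟨⟨hF, fun hE₁F => h ⟨hsub F hF hE₁F, hE₁F, hE⟩⟩, hE⟩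
          · rintro ⟨⟨hF, h⟩, hE⟩
            exact ⟨⟨hF, hE⟩, fun ⟨_, h2, _⟩ => h h2⟩
        refine ⟨L₁ ++ L₂, isFreeSeq_append _ _ _ hseq₁ (by rw [hres₁']; exact hseq₂), ?_, ?_⟩
        · intro E' hE'
          rcases List.mem_append.mp hE' with h | h
          · exact hcard₁ E' h
          · exact hcard₂ E' h
        · rw [collapseList_append, hres₁', hres₂]
      · -- Case 2a: E₁ is still free in collapseFace S E, with facet F₁
        have hE₁mem : E₁ ∈ collapseFace S E := ⟨hE₁S, hEE₁⟩
        have hF₁mem : F₁ ∈ collapseFace S E := ⟨hF₁facet.1, hEF₁⟩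
        have hF₁facet' : IsFacet (collapseFace S E) F₁ :=
          ⟨hF₁mem, fun G hG hsub' => hF₁facet.2 G hG.1 hsub'⟩
        have hfree' : IsFreeFace (collapseFace S E) E₁ := by
          refine ⟨hE₁mem, F₁, ⟨hF₁facet', hE₁F₁⟩, ?_⟩
          rintro G ⟨hGfacet, hE₁G⟩
          exact (hGfacet.2 F₁ hF₁mem (hsub G hGfacet.1.1 hE₁G)).symm
        have heq : collapseFace (collapseFace S E) E₁ = collapseFace T E := by
          ext F
          simp only [hT, collapseFace, Set.mem_setOf_eq]
          tauto
        refine ⟨E₁ :: L₂, ⟨hfree', by rw [heq]; exact hseq₂⟩, ?_, ?_⟩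
        · intro E' hE'
          rcases List.mem_cons.mp hE' with rfl | h
          · exact hE₁d
          · exact hcard₂ E' h
        · show collapseList (collapseFace (collapseFace S E) E₁) L₂ = ∅
          rw [heq, hres₂]

end Helpers

open ChordalPaper in
/-- if every facet of a `d`-collapsible complex `Σ` containing `E` has
dimension `≤ d-1`, then removing all faces containing `E` preserves `d`-collapsibility. -/
theorem stmt6 (n d : ℕ) (hd : 1 ≤ d) (S : Set (Finset (Fin n))) (hS : IsComplex S)
    (hcol : Collapsible d S) (E : Finset (Fin n))
    (hfac : ∀ F, IsFacet S F → E ⊆ F → F.card ≤ d) :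
    Collapsible d {F ∈ S | ¬ E ⊆ F} := by
  obtain ⟨L, hseq, hcards, hempty⟩ := hcol
  exact main_lemma E L S hS hseq hcards hempty hfac
end

section
/- If a simplicial complex Γ on [n] is d-collapsible for some positive integer d, then Γ is t-chordal for all t ≥ d. -/
namespace ChordalPaper

/-- Auxiliary: a "good sequence" of simplicial deletions: each member is a non-facet
free face of cardinality `t` at its point. -/
def GoodSeq {n : ℕ} (t : ℕ) (Γ : Set (Finset (Fin n))) : List (Finset (Fin n)) → Prop
  | [] => True
  | E :: L => E.card = t ∧ IsFreeFace Γ E ∧ ¬ IsFacet Γ E ∧ GoodSeq t (srDel Γ E) L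

lemma srDelList_append {n : ℕ} (Δ : Set (Finset (Fin n))) (L1 L2 : List (Finset (Fin n))) :
    srDelList Δ (L1 ++ L2) = srDelList (srDelList Δ L1) L2 := by
  induction L1 generalizing Δ with
  | nil => rfl
  | cons E L ih => simp only [List.cons_append, srDelList]; exact ih _

lemma goodSeq_append {n t : ℕ} {Δ : Set (Finset (Fin n))} {L1 L2 : List (Finset (Fin n))}
    (h1 : GoodSeq t Δ L1) (h2 : GoodSeq t (srDelList Δ L1) L2) :
    GoodSeq t Δ (L1 ++ L2) := by
  induction L1 generalizing Δ with
  | nil => exact h2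
  | cons E L ih => exact ⟨h1.1, h1.2.1, h1.2.2.1, ih h1.2.2.2 h2⟩

lemma simpOrder_append {n t : ℕ} {Δ : Set (Finset (Fin n))} {L M : List (Finset (Fin n))}
    (h1 : GoodSeq t Δ L) (h2 : IsSimpOrder t (srDelList Δ L) M) :
    IsSimpOrder t Δ (L ++ M) := by
  induction L generalizing Δ with
  | nil => exact h2
  | cons E L ih => exact ⟨h1.1, h1.2.1, h1.2.2.1, ih h1.2.2.2 h2⟩

lemma exists_facet {n : ℕ} (Γ : Set (Finset (Fin n))) (G : Finset (Fin n)) (hG : G ∈ Γ) :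
    ∃ F, IsFacet Γ F ∧ G ⊆ F := by
  have hfin : {H ∈ Γ | G ⊆ H}.Finite := Set.toFinite _
  obtain ⟨F, hF, hmax⟩ : ∃ F ∈ {H ∈ Γ | G ⊆ H}, ∀ K ∈ {H ∈ Γ | G ⊆ H}, id F ≤ id K → id F = id K := by
    obtain ⟨F, hF⟩ := hfin.exists_maximal ⟨G, hG, subset_rfl⟩
    exact ⟨F, hF.1, fun K hK hFK => le_antisymm hFK (hF.2 hK hFK)⟩
  exact ⟨F, ⟨hF.1, fun K hK hFK => (hmax K ⟨hK, hF.2.trans hFK⟩ hFK).symm⟩, hF.2⟩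

/-- If `E` has a unique facet `F` above it, every face containing `E` is inside `F`. -/
lemma subset_of_uniqueFacet {n : ℕ} {Γ : Set (Finset (Fin n))} {E F G : Finset (Fin n)}
    (huniq : ∀ F', IsFacet Γ F' ∧ E ⊆ F' → F' = F)
    (hG : G ∈ Γ) (hEG : E ⊆ G) : G ⊆ F := by
  obtain ⟨F', hF', hGF'⟩ := exists_facet Γ G hG
  exact (huniq F' ⟨hF', hEG.trans hGF'⟩) ▸ hGF'

/-- Key interval-collapsing lemma: if all faces of `Δ` of cardinality `> t` containing `E`
lie in the interval `[E, F]`, and all subsets of `F` are faces, then there is a good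
deletion sequence removing exactly the faces of cardinality `> t` containing `E`. -/
lemma interval_lemma {n t : ℕ} :
    ∀ (k : ℕ) (Δ : Set (Finset (Fin n))) (E F : Finset (Fin n)),
      F.card - E.card ≤ k → E ⊆ F → E.card ≤ t → t < F.card →
      (∀ S, S ⊆ F → S ∈ Δ) →
      (∀ S ∈ Δ, E ⊆ S → t < S.card → S ⊆ F) →
      ∃ L, GoodSeq t Δ L ∧
        srDelList Δ L = {S ∈ Δ | ¬(E ⊆ S ∧ t < S.card)} := by
  intro k
  induction k with
  | zero =>
    intro Δ E F hk hEF hEt htF _ _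
    have := Finset.card_le_card hEF
    omega
  | succ k ih =>
    intro Δ E F hk hEF hEt htF H1 H2
    rcases eq_or_lt_of_le hEt with hEt' | hEt'
    · -- base case : E.card = t
      have hEΔ : E ∈ Δ := H1 E hEF
      have hFΔ : F ∈ Δ := H1 F subset_rfl
      have hFfac : IsFacet Δ F := by
        refine ⟨hFΔ, fun S hS hFS => ?_⟩
        exact subset_antisymm
          (H2 S hS (hEF.trans hFS) (lt_of_lt_of_le htF (Finset.card_le_card hFS))) hFS
      have hfree : IsFreeFace Δ E := by
        refine ⟨hEΔ, F, ⟨hFfac, hEF⟩, ?_⟩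
        rintro G ⟨hGfac, hEG⟩
        by_cases ht : t < G.card
        · exact (hGfac.2 F hFΔ (H2 G hGfac.1 hEG ht)).symm
        · have hGE : G = E := (Finset.eq_of_subset_of_card_le hEG (by omega)).symm
          exact (hGfac.2 F hFΔ (hGE ▸ hEF)).symm
      have hnotfac : ¬ IsFacet Δ E := by
        intro h
        have := h.2 F hFΔ hEF
        have := Finset.card_le_card (le_of_eq this : F ≤ E)
        omega
      refine ⟨[E], ⟨hEt', hfree, hnotfac, trivial⟩, ?_⟩
      show srDel Δ E = _
      ext S
      simp only [srDel, Set.mem_setOf_eq]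
      constructor
      · rintro ⟨hS, hns⟩
        refine ⟨hS, ?_⟩
        rintro ⟨hES, htS⟩
        exact hns (Finset.ssubset_iff_subset_ne.2 ⟨hES, fun h => by
          rw [← h] at htS; omega⟩)
      · rintro ⟨hS, hns⟩
        refine ⟨hS, fun hss => hns ⟨hss.subset, ?_⟩⟩
        have := Finset.card_lt_card hss
        omega
    · -- E.card < t : pick v ∈ F \ E
      have hssub : E ⊂ F := Finset.ssubset_iff_subset_ne.2 ⟨hEF, fun h => by
        rw [h] at hEt'; omega⟩
      obtain ⟨v, hvF, hvE⟩ := Finset.exists_of_ssubset hssub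
      have hcardins : (insert v E).card = E.card + 1 := Finset.card_insert_of_notMem hvE
      obtain ⟨L1, hL1good, hL1eq⟩ := ih Δ (insert v E) F
        (by omega)
        (Finset.insert_subset hvF hEF)
        (by omega) htF H1
        (fun S hS hsub => H2 S hS ((Finset.subset_insert v E).trans hsub))
      by_cases htF' : t + 1 < F.card
      · -- recurse on F.erase v
        have hEFe : E ⊆ F.erase v := Finset.subset_erase.2 ⟨hEF, hvE⟩
        have hcardE : (F.erase v).card = F.card - 1 := Finset.card_erase_of_mem hvF
        have hΔ1 := hL1eq
        set Δ1 : Set (Finset (Fin n)) :=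
          {S ∈ Δ | ¬(insert v E ⊆ S ∧ t < S.card)} with hΔ1def
        have H1₂ : ∀ S, S ⊆ F.erase v → S ∈ Δ1 := by
          intro S hS
          refine ⟨H1 S (hS.trans (Finset.erase_subset v F)), ?_⟩
          rintro ⟨hins, -⟩
          exact Finset.notMem_erase v F (hS (hins (Finset.mem_insert_self v E)))
        have H2₂ : ∀ S ∈ Δ1, E ⊆ S → t < S.card → S ⊆ F.erase v := by
          rintro S ⟨hSΔ, hSn⟩ hES htS
          refine Finset.subset_erase.2 ⟨H2 S hSΔ hES htS, fun hvS => ?_⟩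
          exact hSn ⟨Finset.insert_subset hvS hES, htS⟩
        obtain ⟨L2, hL2good, hL2eq⟩ := ih Δ1 E (F.erase v)
          (by omega) hEFe hEt (by omega) H1₂ H2₂
        refine ⟨L1 ++ L2, ?_, ?_⟩
        · exact goodSeq_append hL1good (by rw [hL1eq]; exact hL2good)
        · rw [srDelList_append, hL1eq, hL2eq]
          ext S
          simp only [hΔ1def, Set.mem_setOf_eq]
          constructor
          · rintro ⟨⟨hS, -⟩, hn⟩; exact ⟨hS, hn⟩
          · rintro ⟨hS, hn⟩
            exact ⟨⟨hS, fun ⟨hi, hc⟩ => hn ⟨(Finset.subset_insert v E).trans hi, hc⟩⟩, hn⟩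
      · -- F.card = t + 1 : the first pass already removed everything
        have hFcard : F.card = t + 1 := by omega
        refine ⟨L1, hL1good, ?_⟩
        rw [hL1eq]
        ext S
        simp only [Set.mem_setOf_eq]
        constructor
        · rintro ⟨hS, hn⟩
          refine ⟨hS, ?_⟩
          rintro ⟨hES, htS⟩
          have hSF : S ⊆ F := H2 S hS hES htS
          have hSFe : S = F := Finset.eq_of_subset_of_card_le hSF (by omega)
          exact hn ⟨Finset.insert_subset (by rw [hSFe]; exact hvF) hES, htS⟩
        · rintro ⟨hS, hn⟩
          exact ⟨hS, fun ⟨hi, hc⟩ => hn ⟨(Finset.subset_insert v E).trans hi, hc⟩⟩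

lemma collapse_isComplex {n : ℕ} {Γ : Set (Finset (Fin n))} (hΓ : IsComplex Γ)
    (E : Finset (Fin n)) : IsComplex (collapseFace Γ E) := by
  rintro F ⟨hF, hnE⟩ F' hF'
  exact ⟨hΓ F hF F' hF', fun h => hnE (h.trans hF')⟩

lemma dClosure_eq_of_collapse {n t : ℕ} {Γ : Set (Finset (Fin n))} {E : Finset (Fin n)}
    (hEt : E.card ≤ t) :
    dClosure t (collapseFace Γ E) =
      {S ∈ dClosure t Γ | ¬(E ⊆ S ∧ t < S.card)} := by
  ext S
  simp only [dClosure, collapseFace, Set.mem_setOf_eq]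
  constructor
  · intro h
    rcases h with h | h
    · exact ⟨Or.inl h, fun ⟨_, hc⟩ => by omega⟩
    · refine ⟨?_, ?_⟩
      · exact Or.inr fun G hG hGc => (h G hG hGc).1
      · rintro ⟨hES, htS⟩
        obtain ⟨G, hEG, hGS, hGc⟩ :=
          Finset.exists_subsuperset_card_eq (n := t + 1) hES (by omega) (by omega)
        exact (h G hGS hGc).2 hEG
  · rintro ⟨h, hn⟩
    rcases h with h | h
    · exact Or.inl h
    · by_cases hc : S.card ≤ t
      · exact Or.inl hc
      · refine Or.inr fun G hG hGc => ⟨h G hG hGc, fun hEG => ?_⟩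
        exact hn ⟨hEG.trans hG, by omega⟩

lemma main_aux {n d t : ℕ} (hdt : d ≤ t) :
    ∀ (L : List (Finset (Fin n))) (Γ : Set (Finset (Fin n))), IsComplex Γ →
      IsFreeSeq Γ L → (∀ E ∈ L, E.card ≤ d) → collapseList Γ L = ∅ →
      ∃ M, IsSimpOrder t (dClosure t Γ) M := by
  intro L
  induction L with
  | nil =>
    intro Γ _ _ _ hempty
    have hΓ : Γ = ∅ := hempty
    refine ⟨[], ?_⟩
    show dClosure t Γ = fullSkel n t
    subst hΓ
    ext S
    simp only [dClosure, fullSkel, Set.mem_setOf_eq, Set.mem_empty_iff_false]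
    constructor
    · rintro (h | h)
      · exact h
      · by_contra hc
        obtain ⟨G, hGS, hGc⟩ := Finset.exists_subset_card_eq (s := S) (n := t + 1) (by omega)
        exact h G hGS hGc
    · exact Or.inl
  | cons E L ih =>
    intro Γ hΓ hfs hcards hempty
    obtain ⟨⟨hEΓ, F, ⟨hFfac, hEF⟩, huniq⟩, hfs'⟩ := hfs
    have hEd : E.card ≤ d := hcards E (List.mem_cons_self (a := E) (l := L))
    have hEt : E.card ≤ t := le_trans hEd hdt
    have hGF : ∀ G ∈ Γ, E ⊆ G → G ⊆ F := fun G hG hEG =>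
      subset_of_uniqueFacet huniq hG hEG
    obtain ⟨M, hM⟩ := ih (collapseFace Γ E) (collapse_isComplex hΓ E) hfs'
      (fun G hG => hcards G (List.mem_cons_of_mem E hG)) hempty
    rw [dClosure_eq_of_collapse hEt] at hM
    by_cases htF : t < F.card
    · -- use the interval lemma
      have H1 : ∀ S, S ⊆ F → S ∈ dClosure t Γ := by
        intro S hS
        exact Or.inr fun G hG hGc => hΓ F hFfac.1 G (hG.trans hS)
      have H2 : ∀ S ∈ dClosure t Γ, E ⊆ S → t < S.card → S ⊆ F := by
        intro S hS hES htS x hxS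
        have hS' : ∀ G ⊆ S, G.card = t + 1 → G ∈ Γ := by
          rcases hS with h | h
          · omega
          · exact h
        have hix : insert x E ⊆ S := Finset.insert_subset hxS hES
        have hixc : (insert x E).card ≤ t + 1 :=
          le_trans (Finset.card_insert_le x E) (by omega)
        obtain ⟨G, hiG, hGS, hGc⟩ :=
          Finset.exists_subsuperset_card_eq (n := t + 1) hix hixc (by omega)
        have hGΓ : G ∈ Γ := hS' G hGS hGc
        have : G ⊆ F := hGF G hGΓ (((Finset.subset_insert x E).trans hiG))
        exact this (hiG (Finset.mem_insert_self x E))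
      obtain ⟨L0, hL0good, hL0eq⟩ := interval_lemma (F.card - E.card)
        (dClosure t Γ) E F le_rfl hEF hEt htF H1 H2
      exact ⟨L0 ++ M, simpOrder_append hL0good (by rw [hL0eq]; exact hM)⟩
    · -- F.card ≤ t : nothing is removed
      have heq : {S ∈ dClosure t Γ | ¬(E ⊆ S ∧ t < S.card)} = dClosure t Γ := by
        ext S
        simp only [Set.mem_setOf_eq]
        refine ⟨fun h => h.1, fun hS => ⟨hS, ?_⟩⟩
        rintro ⟨hES, htS⟩
        have hS' : ∀ G ⊆ S, G.card = t + 1 → G ∈ Γ := by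
          rcases hS with h | h
          · omega
          · exact h
        obtain ⟨G, hEG, hGS, hGc⟩ :=
          Finset.exists_subsuperset_card_eq (n := t + 1) hES (by omega) (by omega)
        have := Finset.card_le_card (hGF G (hS' G hGS hGc) hEG)
        omega
      rw [heq] at hM
      exact ⟨M, hM⟩

end ChordalPaper

open ChordalPaper in
/-- a `d`-collapsible complex is `t`-chordal for all `t ≥ d`. -/
theorem stmt9 (n d : ℕ) (hd : 1 ≤ d) (Γ : Set (Finset (Fin n))) (hΓ : IsComplex Γ)
    (hcol : Collapsible d Γ) :
    ∀ t, d ≤ t → DChordal t Γ := by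
  obtain ⟨L, hL1, hL2, hL3⟩ := hcol
  exact fun t ht => main_aux ht L Γ hΓ hL1 (fun E hE => hL2 E hE) hL3
end
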